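/- If q = p^a is a prime power and g is a q-cycle in S_q, then there is a unique Sylow p-subgroup of S_q containing g. -/

import Mathlib

open Equiv Equiv.Perm Subgroup

namespace USCQ

def rr (q : ℕ) [NeZero q] : Equiv.Perm (Fin q) := Equiv.addRight 1

section A
variable {q : ℕ} [NeZero q]

lemma q_pos : 0 < q := Nat.pos_of_ne_zero (NeZero.ne q)

lemma rr_apply (x : Fin q) : (rr q) x = ⟨(x.val + 1) % q, Nat.mod_lt _ q_pos⟩ := by
  show x + 1 = _
  apply Fin.ext
  rw [Fin.add_def, Fin.val_one']
  simp [Nat.add_mod, Nat.mod_mod_of_dvd]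

lemma rr_pow (j : ℕ) (x : Fin q) : ((rr q) ^ j) x = ⟨(x.val + j) % q, Nat.mod_lt _ q_pos⟩ := by
  induction j with
  | zero => simp [Nat.mod_eq_of_lt x.isLt]
  | succ j ih =>
    rw [pow_succ', Equiv.Perm.mul_apply, ih, rr_apply]
    apply Fin.ext
    show ((x.val + j) % q + 1) % q = (x.val + (j + 1)) % q
    conv_rhs => rw [show x.val + (j+1) = (x.val + j) + 1 by omega]
    simp [Nat.add_mod]

lemma rr_pow_q : (rr q) ^ q = 1 := by
  ext x
  rw [rr_pow]
  simp [Nat.add_mod, Nat.mod_eq_of_lt x.isLt]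

lemma rr_sameCycle (x y : Fin q) : (rr q).SameCycle x y := by
  refine ⟨((y.val + q - x.val : ℕ) : ℤ), ?_⟩
  rw [zpow_natCast, rr_pow]
  apply Fin.ext
  show (x.val + (y.val + q - x.val)) % q = y.val
  have hx := x.isLt; have hy := y.isLt
  rw [show x.val + (y.val + q - x.val) = y.val + q by omega]
  simp [Nat.mod_eq_of_lt hy]

lemma rr_centralizer (τ : Equiv.Perm (Fin q)) (hc : Commute τ (rr q)) :
    τ = (rr q) ^ (τ ⟨0, q_pos⟩).val := by
  set n := (τ ⟨0, q_pos⟩).val with hn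
  ext y
  have h1 : ∀ j : ℕ, τ (((rr q) ^ j) ⟨0, q_pos⟩) = ((rr q) ^ j) (τ ⟨0, q_pos⟩) := by
    intro j
    have := (hc.pow_right j).eq
    calc τ (((rr q)^j) ⟨0, q_pos⟩) = (τ * (rr q)^j) ⟨0, q_pos⟩ := rfl
      _ = ((rr q)^j * τ) ⟨0, q_pos⟩ := by rw [this]
      _ = _ := rfl
  have hy : ((rr q) ^ (y.val)) ⟨0, q_pos⟩ = y := by
    rw [rr_pow]; apply Fin.ext; show (0 + y.val) % q = y.val
    simp [Nat.mod_eq_of_lt y.isLt]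
  have h0 : ((rr q) ^ n) ⟨0, q_pos⟩ = τ ⟨0, q_pos⟩ := by
    rw [rr_pow]; apply Fin.ext; show (0 + n) % q = n
    simp [hn, Nat.mod_eq_of_lt (τ _).isLt]
  show _ = _
  apply congrArg Fin.val ?_
  calc τ y = τ (((rr q) ^ (y.val)) ⟨0, q_pos⟩) := by rw [hy]
    _ = ((rr q)^(y.val)) (((rr q)^n) ⟨0, q_pos⟩) := by rw [h1, h0]
    _ = ((rr q)^n) (((rr q)^(y.val)) ⟨0, q_pos⟩) := by
        rw [← Equiv.Perm.mul_apply, ← Equiv.Perm.mul_apply, pow_mul_comm]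
    _ = ((rr q)^n) y := by rw [hy]

end A

section Blocks
variable (m p : ℕ) [NeZero m] [NeZero p]

instance : NeZero (m * p) := ⟨mul_ne_zero (NeZero.ne m) (NeZero.ne p)⟩

def β (x : Fin (m * p)) : Fin m := ⟨x.val % m, Nat.mod_lt _ q_pos⟩

def emb (b : Fin m) : Fin (m * p) :=
  ⟨b.val, lt_of_lt_of_le b.isLt (Nat.le_mul_of_pos_right m q_pos)⟩

def zz : Equiv.Perm (Fin (m * p)) := (rr (m * p)) ^ m

lemma β_emb (b : Fin m) : β m p (emb m p b) = b := by
  apply Fin.ext; show b.val % m = b.val; exact Nat.mod_eq_of_lt b.isLt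

lemma β_z (x : Fin (m * p)) : β m p ((zz m p) x) = β m p x := by
  apply Fin.ext
  show ((zz m p) x).val % m = x.val % m
  rw [zz, rr_pow]
  show ((x.val + m) % (m * p)) % m = x.val % m
  rw [Nat.mod_mod_of_dvd _ (Dvd.intro p rfl), Nat.add_mod_right]

lemma β_zpow (k : ℕ) (x : Fin (m * p)) : β m p (((zz m p) ^ k) x) = β m p x := by
  induction k with
  | zero => rfl
  | succ k ih => rw [pow_succ', Equiv.Perm.mul_apply, β_z, ih]

lemma exists_pow_z {x y : Fin (m * p)} (h : β m p x = β m p y) :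
    ∃ k : ℕ, ((zz m p) ^ k) x = y := by
  have hval : x.val % m = y.val % m := congrArg Fin.val h
  have hm : 0 < m := q_pos
  have hdx : m * (x.val / m) + x.val % m = x.val := Nat.div_add_mod _ _
  have hdy : m * (y.val / m) + y.val % m = y.val := Nat.div_add_mod _ _
  have hxp : x.val / m < p := Nat.div_lt_of_lt_mul x.isLt
  have hyp : y.val / m < p := Nat.div_lt_of_lt_mul y.isLt
  refine ⟨y.val / m + p - x.val / m, ?_⟩
  have hk : x.val + m * (y.val / m + p - x.val / m) = y.val + m * p := by
    have h2 : x.val % m < m := Nat.mod_lt _ hm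
    set sx := x.val / m
    set sy := y.val / m
    set tx := x.val % m
    set ty := y.val % m
    have : m * (sy + p - sx) = m * sy + m * p - m * sx := by
      rw [Nat.mul_sub, Nat.mul_add]
    omega
  rw [zz, ← pow_mul, rr_pow]
  apply Fin.ext
  show (x.val + m * _) % (m * p) = y.val
  rw [hk, Nat.add_mod_right, Nat.mod_eq_of_lt y.isLt]

def bmap (h : Equiv.Perm (Fin (m * p))) (b : Fin m) : Fin m := β m p (h (emb m p b))

variable {m p}

lemma bmap_wd {h : Equiv.Perm (Fin (m * p))} (hc : Commute h (zz m p)) {x y : Fin (m * p)}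
    (hxy : β m p x = β m p y) : β m p (h x) = β m p (h y) := by
  obtain ⟨k, rfl⟩ := exists_pow_z m p hxy
  have : h (((zz m p) ^ k) x) = ((zz m p) ^ k) (h x) := by
    have := (hc.pow_right k).eq
    calc h (((zz m p)^k) x) = (h * (zz m p)^k) x := rfl
      _ = ((zz m p)^k * h) x := by rw [this]
      _ = _ := rfl
  rw [this, β_zpow]

lemma bmap_β {h : Equiv.Perm (Fin (m * p))} (hc : Commute h (zz m p)) (x : Fin (m * p)) :
    bmap m p h (β m p x) = β m p (h x) := bmap_wd hc (β_emb m p (β m p x))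

variable (m p)

lemma commute_of_mem {h : Equiv.Perm (Fin (m * p))}
    (hh : h ∈ Subgroup.centralizer {zz m p}) : Commute h (zz m p) :=
  Subgroup.mem_centralizer_singleton_iff.mp hh

def pihom : ↥(Subgroup.centralizer {zz m p}) →* Equiv.Perm (Fin m) :=
  MonoidHom.mk' (fun h =>
    { toFun := bmap m p h.1
      invFun := bmap m p h.1⁻¹
      left_inv := by
        intro b
        show bmap m p h.1⁻¹ (β m p (h.1 (emb m p b))) = b
        rw [bmap_β (commute_of_mem m p (inv_mem h.2)), ← Equiv.Perm.mul_apply, inv_mul_cancel, Equiv.Perm.one_apply, β_emb]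
      right_inv := by
        intro b
        show bmap m p h.1 (β m p (h.1⁻¹ (emb m p b))) = b
        rw [bmap_β (commute_of_mem m p h.2), ← Equiv.Perm.mul_apply, mul_inv_cancel, Equiv.Perm.one_apply, β_emb] })
    (by
      intro h₁ h₂
      apply Equiv.ext
      intro b
      show bmap m p (h₁.1 * h₂.1) b = bmap m p h₁.1 (bmap m p h₂.1 b)
      show β m p (h₁.1 (h₂.1 (emb m p b))) = bmap m p h₁.1 (β m p (h₂.1 (emb m p b)))
      rw [bmap_β (commute_of_mem m p h₁.2)])

lemma pihom_apply (h : ↥(Subgroup.centralizer {zz m p})) (b : Fin m) :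
    (pihom m p h) b = β m p (h.1 (emb m p b)) := rfl

lemma pihom_ker_pow (h : ↥(Subgroup.centralizer {zz m p})) (hker : pihom m p h = 1) :
    h.1 ^ p = 1 := by
  have hβ : ∀ x, β m p (h.1 x) = β m p x := by
    intro x
    rw [← bmap_β (commute_of_mem m p h.2) x]
    show (pihom m p h) (β m p x) = β m p x
    rw [hker]; rfl
  apply Equiv.ext
  intro x
  obtain ⟨k, hk⟩ := exists_pow_z m p (hβ x).symm
  have hcomm : ∀ j : ℕ, ∀ w, h.1 (((zz m p) ^ j) w) = ((zz m p) ^ j) (h.1 w) := by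
    intro j w
    have := ((commute_of_mem m p h.2).pow_right j).eq
    calc h.1 (((zz m p)^j) w) = (h.1 * (zz m p)^j) w := rfl
      _ = ((zz m p)^j * h.1) w := by rw [this]
      _ = _ := rfl
  have hj : ∀ j : ℕ, (h.1 ^ j) x = ((zz m p) ^ (j * k)) x := by
    intro j
    induction j with
    | zero => simp
    | succ j ih =>
      rw [pow_succ', Equiv.Perm.mul_apply, ih, hcomm, ← hk, ← Equiv.Perm.mul_apply, ← pow_add,
        show j * k + k = (j + 1) * k by ring]
  have hzp : (zz m p) ^ p = 1 := by
    rw [zz, ← pow_mul]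
    exact rr_pow_q
  have := hj p
  rw [pow_mul, hzp, one_pow] at this
  exact this

lemma rr_mem_centralizer : rr (m * p) ∈ Subgroup.centralizer {zz m p} := by
  rw [Subgroup.mem_centralizer_singleton_iff, zz]
  exact ((Commute.refl (rr (m * p))).pow_right m).eq

lemma pihom_rr_sameCycle (b c : Fin m) :
    (pihom m p ⟨rr (m * p), rr_mem_centralizer m p⟩).SameCycle b c := by
  have hm : 0 < m := q_pos
  set k := c.val + m * p - b.val with hkdef
  refine ⟨(k : ℤ), ?_⟩
  have h1 : (pihom m p ⟨rr (m * p), rr_mem_centralizer m p⟩) ^ (k : ℤ)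
      = pihom m p (⟨rr (m * p), rr_mem_centralizer m p⟩ ^ k) := by
    rw [zpow_natCast, map_pow]
  rw [h1, pihom_apply]
  have h2 : ((⟨rr (m * p), rr_mem_centralizer m p⟩ :
      ↥(Subgroup.centralizer {zz m p})) ^ k).1 = (rr (m * p)) ^ k := rfl
  rw [h2, rr_pow]
  apply Fin.ext
  show ((emb m p b).val + k) % (m * p) % m = c.val
  have hb : (emb m p b).val = b.val := rfl
  have hble : b.val ≤ c.val + m * p := le_trans (le_of_lt b.isLt)
    (le_trans (Nat.le_mul_of_pos_right m q_pos) (Nat.le_add_left _ _))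
  rw [hb, show b.val + k = c.val + m * p by omega, Nat.add_mod_right,
    Nat.mod_eq_of_lt (lt_of_lt_of_le c.isLt (Nat.le_mul_of_pos_right m q_pos)),
    Nat.mod_eq_of_lt c.isLt]

end Blocks

section Helpers
variable {n : ℕ}

lemma eq_one_of_fix {g τ : Equiv.Perm (Fin n)} (hg : ∀ x y : Fin n, g.SameCycle x y)
    (hc : Commute τ g) {x : Fin n} (hx : τ x = x) : τ = 1 := by
  apply Equiv.ext
  intro y
  obtain ⟨k, hk⟩ := hg x y
  have h1 : τ ((g ^ k) x) = (g ^ k) (τ x) := by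
    have := (hc.zpow_right k).eq
    calc τ ((g^k) x) = (τ * g^k) x := rfl
      _ = (g^k * τ) x := by rw [this]
      _ = _ := rfl
  rw [← hk, h1, hx]
  rfl

lemma apply_ne_of_trans (hn : 2 ≤ n) {g : Equiv.Perm (Fin n)}
    (hg : ∀ x y : Fin n, g.SameCycle x y) (x : Fin n) : g x ≠ x := by
  intro hx
  have hg1 : g = 1 := eq_one_of_fix hg (Commute.refl g) hx
  obtain ⟨k, hk⟩ := hg ⟨0, by omega⟩ ⟨1, by omega⟩
  rw [hg1, one_zpow] at hk
  have : (0 : ℕ) = 1 := congrArg Fin.val hk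
  omega

lemma isCycle_of_trans (hn : 2 ≤ n) {g : Equiv.Perm (Fin n)}
    (hg : ∀ x y : Fin n, g.SameCycle x y) : g.IsCycle :=
  ⟨⟨0, by omega⟩, apply_ne_of_trans hn hg _, fun y _ => hg _ y⟩

lemma support_univ_of_trans (hn : 2 ≤ n) {g : Equiv.Perm (Fin n)}
    (hg : ∀ x y : Fin n, g.SameCycle x y) : g.support = Finset.univ :=
  Finset.eq_univ_iff_forall.mpr fun x => Equiv.Perm.mem_support.mpr (apply_ne_of_trans hn hg x)

lemma exists_conj_rr [NeZero n] (hn : 2 ≤ n) {g : Equiv.Perm (Fin n)}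
    (hg : ∀ x y : Fin n, g.SameCycle x y) : ∃ σ : Equiv.Perm (Fin n), σ * rr n * σ⁻¹ = g := by
  have h1 : (rr n).IsCycle := isCycle_of_trans hn (fun x y => rr_sameCycle x y)
  have h2 : g.IsCycle := isCycle_of_trans hn hg
  have h3 : (rr n).support.card = g.support.card := by
    rw [support_univ_of_trans hn (fun x y => rr_sameCycle x y), support_univ_of_trans hn hg]
  exact isConj_iff.mp (h1.isConj h2 h3)

lemma pow_eq_one_of_trans [NeZero n] (hn : 2 ≤ n) {g : Equiv.Perm (Fin n)}
    (hg : ∀ x y : Fin n, g.SameCycle x y) : g ^ n = 1 := by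
  obtain ⟨σ, rfl⟩ := exists_conj_rr hn hg
  rw [conj_pow, rr_pow_q, mul_one, mul_inv_cancel]

end Helpers

lemma core (p a : ℕ) [NeZero p] (hp : p.Prime)
    (ih : ∀ g : Equiv.Perm (Fin (p ^ a)), (∀ x y, g.SameCycle x y) →
      ∀ R S : Subgroup (Equiv.Perm (Fin (p ^ a))), IsPGroup p R → IsPGroup p S →
      g ∈ R → g ∈ S → IsPGroup p ((R ⊔ S : Subgroup (Equiv.Perm (Fin (p ^ a))))))
    (R S : Subgroup (Equiv.Perm (Fin (p ^ a * p)))) (hR : IsPGroup p R) (hS : IsPGroup p S)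
    (hrR : rr (p ^ a * p) ∈ R) (hrS : rr (p ^ a * p) ∈ S) :
    IsPGroup p ((R ⊔ S : Subgroup (Equiv.Perm (Fin (p ^ a * p))))) := by
  haveI : Fact p.Prime := ⟨hp⟩
  have h2 : 2 ≤ p ^ a * p := by
    have h3 := hp.two_le
    have h4 : 1 ≤ p ^ a := Nat.one_le_iff_ne_zero.mpr (pow_ne_zero _ hp.ne_zero)
    calc 2 ≤ p := h3
      _ = 1 * p := (one_mul p).symm
      _ ≤ p ^ a * p := Nat.mul_le_mul_right p h4
  have hrne : rr (p ^ a * p) ≠ 1 := by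
    intro h
    have h0 : ((rr (p ^ a * p)) ^ 1) ⟨0, q_pos⟩ = ⟨0, q_pos⟩ := by rw [pow_one, h]; rfl
    rw [rr_pow] at h0
    have h0v : (0 + 1) % (p ^ a * p) = 0 := congrArg Fin.val h0
    rw [Nat.mod_eq_of_lt (by omega)] at h0v
    omega
  -- every p-subgroup containing rr centralizes zz
  have hle : ∀ T : Subgroup (Equiv.Perm (Fin (p ^ a * p))), IsPGroup p T →
      rr (p ^ a * p) ∈ T → T ≤ Subgroup.centralizer {zz (p ^ a) p} := by
    intro T hT hrT
    haveI : Nontrivial ↥T :=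
      ⟨⟨⟨rr (p ^ a * p), hrT⟩, 1, fun h => hrne (by simpa [Subtype.ext_iff] using h)⟩⟩
    have hcnt : Nontrivial (Subgroup.center ↥T) := hT.center_nontrivial
    obtain ⟨⟨c, hc⟩, hc1⟩ := exists_ne (1 : Subgroup.center ↥T)
    have hcom : ∀ x ∈ T, Commute x (c : Equiv.Perm (Fin (p ^ a * p))) := by
      intro x hx
      have h5 := Subgroup.mem_center_iff.mp hc ⟨x, hx⟩
      exact congrArg Subtype.val h5
    have hne : (c : Equiv.Perm (Fin (p ^ a * p))) ≠ 1 := by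
      intro h
      exact hc1 (Subtype.ext (Subtype.ext h))
    have hcr : Commute (c : Equiv.Perm (Fin (p ^ a * p))) (rr (p ^ a * p)) :=
      (hcom _ hrT).symm
    have heq : (c : Equiv.Perm (Fin (p ^ a * p)))
        = (rr (p ^ a * p)) ^ ((c : Equiv.Perm (Fin (p ^ a * p))) ⟨0, q_pos⟩).val :=
      rr_centralizer _ hcr
    set n := ((c : Equiv.Perm (Fin (p ^ a * p))) ⟨0, q_pos⟩).val with hn
    have hn0 : n ≠ 0 := by
      intro h
      rw [h, pow_zero] at heq
      exact hne heq
    have hnq : n < p ^ a * p := ((c : Equiv.Perm (Fin (p ^ a * p))) _).isLt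
    have hdq : Nat.gcd n (p ^ a * p) ∣ p ^ a * p := Nat.gcd_dvd_right _ _
    have hdn : Nat.gcd n (p ^ a * p) ∣ n := Nat.gcd_dvd_left _ _
    have hqpow : p ^ a * p = p ^ (a + 1) := (pow_succ p a).symm
    obtain ⟨v, hv, hdv⟩ := (Nat.dvd_prime_pow hp).mp (hqpow ▸ hdq)
    have hva : v ≤ a := by
      by_contra hva
      have hv1 : v = a + 1 := by omega
      rw [hv1, ← hqpow] at hdv
      have h6 : Nat.gcd n (p ^ a * p) ≤ n := Nat.le_of_dvd (Nat.pos_of_ne_zero hn0) hdn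
      omega
    have hdm : Nat.gcd n (p ^ a * p) ∣ p ^ a := hdv ▸ (pow_dvd_pow p hva)
    have hbez : (rr (p ^ a * p)) ^ ((Nat.gcd n (p ^ a * p) : ℤ))
        = (c : Equiv.Perm (Fin (p ^ a * p))) ^ (Nat.gcdA n (p ^ a * p)) := by
      rw [show ((Nat.gcd n (p ^ a * p) : ℤ)) = n * Nat.gcdA n (p ^ a * p)
        + ((p ^ a * p : ℕ) : ℤ) * Nat.gcdB n (p ^ a * p) from Nat.gcd_eq_gcd_ab n _]
      rw [zpow_add, zpow_mul, zpow_mul]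
      rw [zpow_natCast, zpow_natCast, rr_pow_q, ← heq]
      simp
    have hzt : ∃ t : ℤ, zz (p ^ a) p = (c : Equiv.Perm (Fin (p ^ a * p))) ^ t := by
      refine ⟨Nat.gcdA n (p ^ a * p) * ((p ^ a / Nat.gcd n (p ^ a * p) : ℕ)), ?_⟩
      have h1 : zz (p ^ a) p
          = ((rr (p ^ a * p)) ^ Nat.gcd n (p ^ a * p)) ^ (p ^ a / Nat.gcd n (p ^ a * p)) := by
        rw [zz, ← pow_mul, Nat.mul_div_cancel' hdm]
      have h2 : (rr (p ^ a * p)) ^ Nat.gcd n (p ^ a * p)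
          = (c : Equiv.Perm (Fin (p ^ a * p))) ^ (Nat.gcdA n (p ^ a * p)) := by
        rw [← zpow_natCast (rr (p ^ a * p)) (Nat.gcd n (p ^ a * p))]; exact hbez
      rw [h1, h2, ← zpow_natCast ((c : Equiv.Perm (Fin (p ^ a * p)))
        ^ (Nat.gcdA n (p ^ a * p))) (p ^ a / Nat.gcd n (p ^ a * p)), ← zpow_mul]
    obtain ⟨t, ht⟩ := hzt
    intro x hx
    rw [Subgroup.mem_centralizer_singleton_iff]
    exact (ht ▸ ((hcom x hx).zpow_right t)).eq
  -- the projection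
  have hrH : rr (p ^ a * p) ∈ Subgroup.centralizer {zz (p ^ a) p} := rr_mem_centralizer _ p
  have hR₂p : IsPGroup p ((R.comap (Subgroup.centralizer {zz (p ^ a) p}).subtype).map
      (pihom (p ^ a) p)) := (hR.comap_subtype).map _
  have hS₂p : IsPGroup p ((S.comap (Subgroup.centralizer {zz (p ^ a) p}).subtype).map
      (pihom (p ^ a) p)) := (hS.comap_subtype).map _
  have hρR₂ : pihom (p ^ a) p ⟨rr (p ^ a * p), hrH⟩
      ∈ (R.comap (Subgroup.centralizer {zz (p ^ a) p}).subtype).map (pihom (p ^ a) p) :=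
    ⟨⟨rr (p ^ a * p), hrH⟩, Subgroup.mem_comap.mpr hrR, rfl⟩
  have hρS₂ : pihom (p ^ a) p ⟨rr (p ^ a * p), hrH⟩
      ∈ (S.comap (Subgroup.centralizer {zz (p ^ a) p}).subtype).map (pihom (p ^ a) p) :=
    ⟨⟨rr (p ^ a * p), hrH⟩, Subgroup.mem_comap.mpr hrS, rfl⟩
  have hT : IsPGroup p (((R.comap (Subgroup.centralizer {zz (p ^ a) p}).subtype).map
        (pihom (p ^ a) p)
      ⊔ (S.comap (Subgroup.centralizer {zz (p ^ a) p}).subtype).map (pihom (p ^ a) p) :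
      Subgroup (Equiv.Perm (Fin (p ^ a))))) :=
    ih _ (fun b c => pihom_rr_sameCycle (p ^ a) p b c) _ _ hR₂p hS₂p hρR₂ hρS₂
  have hker : IsPGroup p ((pihom (p ^ a) p).ker) := by
    intro x
    refine ⟨1, ?_⟩
    have h1 : (x : ↥(Subgroup.centralizer {zz (p ^ a) p})).1 ^ p = 1 :=
      pihom_ker_pow _ _ x.1 x.2
    apply Subtype.ext
    apply Subtype.ext
    rw [pow_one]
    push_cast
    exact h1
  have hT' := hT.comap_of_ker_isPGroup (pihom (p ^ a) p) hker
  have hU := hT'.map (Subgroup.centralizer {zz (p ^ a) p}).subtype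
  apply hU.to_le
  apply sup_le
  · intro x hx
    refine ⟨⟨x, hle R hR hrR hx⟩, Subgroup.mem_comap.mpr ?_, rfl⟩
    exact le_sup_left (α := Subgroup (Equiv.Perm (Fin (p ^ a))))
      (⟨⟨x, hle R hR hrR hx⟩, Subgroup.mem_comap.mpr hx, rfl⟩)
  · intro x hx
    refine ⟨⟨x, hle S hS hrS hx⟩, Subgroup.mem_comap.mpr ?_, rfl⟩
    exact le_sup_right (α := Subgroup (Equiv.Perm (Fin (p ^ a))))
      (⟨⟨x, hle S hS hrS hx⟩, Subgroup.mem_comap.mpr hx, rfl⟩)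

lemma key (p : ℕ) (hp : p.Prime) : ∀ a : ℕ, ∀ g : Equiv.Perm (Fin (p ^ a)),
    (∀ x y : Fin (p ^ a), g.SameCycle x y) → ∀ R S : Subgroup (Equiv.Perm (Fin (p ^ a))),
    IsPGroup p R → IsPGroup p S → g ∈ R → g ∈ S →
    IsPGroup p ((R ⊔ S : Subgroup (Equiv.Perm (Fin (p ^ a))))) := by
  haveI : NeZero p := ⟨hp.ne_zero⟩
  intro a
  induction a with
  | zero =>
    intro g hg R S hR hS hgR hgS
    haveI : Subsingleton (Fin (p ^ 0)) := by rw [pow_zero]; infer_instance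
    intro x
    refine ⟨0, ?_⟩
    have hx1 : (x : Equiv.Perm (Fin (p ^ 0))) = 1 := Equiv.ext fun y => Subsingleton.elim _ _
    apply Subtype.ext
    push_cast
    rw [hx1, one_pow]
  | succ a ih =>
    rw [pow_succ]
    intro g hg R S hR hS hgR hgS
    have h2 : 2 ≤ p ^ a * p := by
      have h4 : 1 ≤ p ^ a := Nat.one_le_iff_ne_zero.mpr (pow_ne_zero _ hp.ne_zero)
      calc 2 ≤ p := hp.two_le
        _ = 1 * p := (one_mul p).symm
        _ ≤ p ^ a * p := Nat.mul_le_mul_right p h4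
    obtain ⟨σ, hσ⟩ := exists_conj_rr h2 hg
    have heg : (MulAut.conj σ⁻¹).toMonoidHom g = rr (p ^ a * p) := by
      show σ⁻¹ * g * σ⁻¹⁻¹ = rr (p ^ a * p)
      rw [← hσ]
      group
    have hR' := hR.map (MulAut.conj σ⁻¹).toMonoidHom
    have hS' := hS.map (MulAut.conj σ⁻¹).toMonoidHom
    have hrR' : rr (p ^ a * p) ∈ R.map (MulAut.conj σ⁻¹).toMonoidHom := ⟨g, hgR, heg⟩
    have hrS' : rr (p ^ a * p) ∈ S.map (MulAut.conj σ⁻¹).toMonoidHom := ⟨g, hgS, heg⟩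
    have hcore := core p a hp ih _ _ hR' hS' hrR' hrS'
    have hmap := hcore.map (MulAut.conj σ⁻¹).symm.toMonoidHom
    have hid : ((MulAut.conj σ⁻¹).symm.toMonoidHom.comp (MulAut.conj σ⁻¹).toMonoidHom)
        = MonoidHom.id (Equiv.Perm (Fin (p ^ a * p))) := by
      ext x
      simp
    have heq2 : ((R.map (MulAut.conj σ⁻¹).toMonoidHom ⊔ S.map (MulAut.conj σ⁻¹).toMonoidHom :
        Subgroup (Equiv.Perm (Fin (p ^ a * p))))).map (MulAut.conj σ⁻¹).symm.toMonoidHom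
        = R ⊔ S := by
      rw [← Subgroup.map_sup, Subgroup.map_map, hid, Subgroup.map_id]
    rw [heq2] at hmap
    exact hmap

end USCQ

theorem unique_sylow_containing_q_cycle (p a : ℕ) (hp : p.Prime) (ha : 0 < a)
    (q : ℕ) (hq : q = p ^ a) (g : Equiv.Perm (Fin q))
    (hg : ∀ x y : Fin q, g.SameCycle x y) :
    ∃! P : Sylow p (Equiv.Perm (Fin q)), g ∈ P := by
  subst hq
  haveI : NeZero p := ⟨hp.ne_zero⟩
  obtain ⟨b, rfl⟩ : ∃ b, a = b + 1 := ⟨a - 1, by omega⟩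
  have h2 : 2 ≤ p ^ (b + 1) := by
    calc 2 ≤ p := hp.two_le
      _ ≤ p ^ (b + 1) := Nat.le_self_pow (by omega) p
  have hgpow : g ^ (p ^ (b + 1)) = 1 := USCQ.pow_eq_one_of_trans h2 hg
  have hzp : IsPGroup p (Subgroup.zpowers g) := by
    intro x
    obtain ⟨k, hk⟩ := Subgroup.mem_zpowers_iff.mp x.2
    refine ⟨b + 1, ?_⟩
    apply Subtype.ext
    push_cast
    rw [← hk, ← zpow_natCast (g ^ k) (p ^ (b + 1)), ← zpow_mul, mul_comm, zpow_mul,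
      zpow_natCast g (p ^ (b + 1)), hgpow, one_zpow]
  obtain ⟨P, hP⟩ := hzp.exists_le_sylow
  refine ⟨P, hP (Subgroup.mem_zpowers g), ?_⟩
  intro Q hQ
  have hPQ : IsPGroup p (((Q : Subgroup (Equiv.Perm (Fin (p ^ (b + 1))))) ⊔ P :
      Subgroup (Equiv.Perm (Fin (p ^ (b + 1)))))) :=
    USCQ.key p hp (b + 1) g hg Q P Q.isPGroup' P.isPGroup' hQ (hP (Subgroup.mem_zpowers g))
  apply Sylow.ext
  have h1 := Q.is_maximal' hPQ le_sup_left
  have h3 := P.is_maximal' hPQ le_sup_right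
  exact h1.symm.trans h3
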